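/- Let K ⊆ ℕ be computably enumerable but not decidable, and let f_K : ℕ → ℕ be the piecewise-defined function associated to K. Then the fourth power f_K⁴ (that is, x ↦ f_K(x)⁴) is not equivalent to any computable function; i.e., there is no computable g : ℕ → ℕ with f_K⁴ ≈ g. -/

import Mathlib

/-- The index `n ≥ 1` of the interval `I_n = (10^{(n-1)²}, 10^{n²}]` containing `x`
(for `x ≥ 2`): the least `n ≥ 1` with `x ≤ 10 ^ (n ^ 2)`.  For `x ∈ I_n` this equals `n`. -/
noncomputable def intervalIdx (x : ℕ) : ℕ :=
  sInf {n : ℕ | 1 ≤ n ∧ x ≤ 10 ^ (n ^ 2)}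

/-- The function `f_K` associated to a set `K ⊆ ℕ`: `f_K(0) = f_K(1) = 0`, and for
`x ∈ I_n`, `f_K(x) = 10^{n³}·x²` if `n ∈ K` and `f_K(x) = 10^{n³+2n²}·x²` if `n ∉ K`. -/
noncomputable def fK (K : Set ℕ) (x : ℕ) : ℕ :=
  letI := Classical.dec (intervalIdx x ∈ K)
  if x ≤ 1 then 0
  else if intervalIdx x ∈ K then 10 ^ (intervalIdx x) ^ 3 * x ^ 2
  else 10 ^ ((intervalIdx x) ^ 3 + 2 * (intervalIdx x) ^ 2) * x ^ 2

/-- A predicate is computably enumerable (semi-decidable). -/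
def CEPred {α : Type*} [Primcodable α] (p : α → Prop) : Prop :=
  Partrec fun a => Part.assert (p a) fun _ => Part.some ()

/-- `u ≼ v`: `u(n) ≤ d·v(d·n) + d·n` for some constant `d ≥ 1`. -/
def DominatedBy (u v : ℕ → ℕ) : Prop :=
  ∃ d : ℕ, 1 ≤ d ∧ ∀ n, u n ≤ d * v (d * n) + d * n

/-- `u ≈ v`: equivalence of complexity functions. -/
def FuncEquiv (u v : ℕ → ℕ) : Prop :=
  DominatedBy u v ∧ DominatedBy v u

lemma intervalIdx_eq' {n x : ℕ} (hn : 1 ≤ n) (h1 : 10 ^ ((n - 1) ^ 2) < x)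
    (h2 : x ≤ 10 ^ (n ^ 2)) : intervalIdx x = n := by
  refine le_antisymm (Nat.sInf_le ⟨hn, h2⟩) (le_csInf ⟨n, hn, h2⟩ ?_)
  rintro m ⟨hm1, hm2⟩
  by_contra h
  push_neg at h
  have hm : m ≤ n - 1 := by omega
  have : (10:ℕ) ^ (m ^ 2) ≤ 10 ^ ((n - 1) ^ 2) :=
    Nat.pow_le_pow_right (by norm_num) (Nat.pow_le_pow_left hm 2)
  omega

lemma two_le_of_mem' {n x : ℕ} (h1 : 10 ^ ((n - 1) ^ 2) < x) : ¬ x ≤ 1 := by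
  have : (1:ℕ) ≤ 10 ^ ((n - 1) ^ 2) := Nat.one_le_pow _ _ (by norm_num)
  omega

lemma fK_eval_mem' {K : Set ℕ} {n x : ℕ} (hn : 1 ≤ n) (h1 : 10 ^ ((n - 1) ^ 2) < x)
    (h2 : x ≤ 10 ^ (n ^ 2)) (hK : n ∈ K) : fK K x = 10 ^ n ^ 3 * x ^ 2 := by
  unfold fK
  rw [intervalIdx_eq' hn h1 h2, if_neg (two_le_of_mem' h1), if_pos hK]

lemma fK_eval_not_mem' {K : Set ℕ} {n x : ℕ} (hn : 1 ≤ n) (h1 : 10 ^ ((n - 1) ^ 2) < x)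
    (h2 : x ≤ 10 ^ (n ^ 2)) (hK : n ∉ K) :
    fK K x = 10 ^ (n ^ 3 + 2 * n ^ 2) * x ^ 2 := by
  unfold fK
  rw [intervalIdx_eq' hn h1 h2, if_neg (two_le_of_mem' h1), if_neg hK]

lemma nat_pow_primrec' : Primrec₂ ((· ^ ·) : ℕ → ℕ → ℕ) :=
  Primrec₂.unpaired'.1 Nat.Primrec.pow

/-- if `K ⊆ ℕ` is c.e. but not decidable, then `f_K⁴` is not equivalent to
any computable function. -/
theorem fK_pow_four_not_equiv_computable (K : Set ℕ)
    (hce : CEPred fun n => n ∈ K) (hK : ¬ ComputablePred fun n => n ∈ K) :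
    ¬ ∃ g : ℕ → ℕ, Computable g ∧ FuncEquiv (fun x => fK K x ^ 4) g := by
  rintro ⟨g, hg, ⟨d1, hd1, H1⟩, ⟨d2, hd2, H2⟩⟩
  classical
  set D := d1 + d2 with hD
  have hD2 : 2 ≤ D := by omega
  set N := 20 * (D + 1) with hNdef
  set X : ℕ → ℕ := fun n => 10 ^ ((n - 1) ^ 2 + 1) with hXdef
  set T : ℕ → ℕ := fun n => D ^ 17 * 10 ^ (4 * n ^ 3) * X n ^ 8 + D ^ 2 * X n with hTdef
  have key : ∀ n, N ≤ n → (n ∈ K ↔ g (d1 * X n) ≤ T n) := by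
    intro n hn
    have hn1 : 1 ≤ n := by omega
    obtain ⟨m, rfl⟩ : ∃ m, n = m + 1 := ⟨n - 1, by omega⟩
    set n := m + 1
    have hsub : n - 1 = m := rfl
    have hXlo : 10 ^ ((n - 1) ^ 2) < X n := Nat.pow_lt_pow_right (by norm_num) (by omega)
    have hexp : (n - 1) ^ 2 + 1 ≤ n ^ 2 := by rw [hsub, show n = m + 1 from rfl]; nlinarith
    have hXhi : X n ≤ 10 ^ (n ^ 2) := Nat.pow_le_pow_right (by norm_num) hexp
    have hDpow : D + 1 < 10 ^ (D + 1) := Nat.lt_pow_self (by norm_num)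
    have hdd : d2 * d1 ≤ D ^ 2 := by rw [hD]; nlinarith [sq_nonneg (d1 + d2)]
    have hX1 : 1 ≤ X n := Nat.one_le_pow _ _ (by norm_num)
    have hy_lo : 10 ^ ((n - 1) ^ 2) < d2 * (d1 * X n) := by
      calc 10 ^ ((n - 1) ^ 2) < X n := hXlo
        _ = 1 * (1 * X n) := by ring
        _ ≤ d2 * (d1 * X n) := by gcongr
    have hy_hi : d2 * (d1 * X n) ≤ 10 ^ (n ^ 2) := by
      calc d2 * (d1 * X n) = (d2 * d1) * X n := by ring
        _ ≤ (10 ^ (D + 1)) ^ 2 * 10 ^ ((n - 1) ^ 2 + 1) := by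
            refine Nat.mul_le_mul (le_trans hdd (le_trans ?_ (Nat.pow_le_pow_left hDpow.le 2))) le_rfl
            exact Nat.pow_le_pow_left (by omega) 2
        _ = 10 ^ (2 * (D + 1) + ((n - 1) ^ 2 + 1)) := by
            rw [← pow_mul, ← pow_add]; ring_nf
        _ ≤ 10 ^ (n ^ 2) := by
            refine Nat.pow_le_pow_right (by norm_num) ?_
            rw [hsub]
            have : D + 2 ≤ n := by omega
            rw [show n = m + 1 from rfl] at this ⊢
            nlinarith
    constructor
    · intro hKn
      have hval : fK K (d2 * (d1 * X n)) = 10 ^ n ^ 3 * (d2 * (d1 * X n)) ^ 2 :=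
        fK_eval_mem' hn1 hy_lo hy_hi hKn
      calc g (d1 * X n) ≤ d2 * fK K (d2 * (d1 * X n)) ^ 4 + d2 * (d1 * X n) := H2 _
        _ = d2 * (d2 * d1) ^ 8 * (10 ^ (4 * n ^ 3) * X n ^ 8) + (d2 * d1) * X n := by
            rw [hval, mul_pow, ← pow_mul, ← pow_mul]
            ring_nf
        _ ≤ D * (D ^ 2) ^ 8 * (10 ^ (4 * n ^ 3) * X n ^ 8) + D ^ 2 * X n := by
            gcongr <;> omega
        _ = T n := by rw [hTdef]; ring
    · intro hle
      by_contra hKn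
      have hval : fK K (X n) = 10 ^ (n ^ 3 + 2 * n ^ 2) * X n ^ 2 :=
        fK_eval_not_mem' hn1 hXlo hXhi hKn
      have hfx : fK K (X n) ^ 4 = 10 ^ (8 * n ^ 2) * (10 ^ (4 * n ^ 3) * X n ^ 8) := by
        rw [hval, mul_pow, ← pow_mul, ← pow_mul,
          show (n ^ 3 + 2 * n ^ 2) * 4 = 8 * n ^ 2 + 4 * n ^ 3 by ring, pow_add]
        ring
      have hXle : X n ≤ 10 ^ (4 * n ^ 3) * X n ^ 8 := by
        calc X n = 1 * X n ^ 1 := by ring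
          _ ≤ 10 ^ (4 * n ^ 3) * X n ^ 8 :=
            Nat.mul_le_mul (Nat.one_le_pow _ _ (by norm_num))
              (Nat.pow_le_pow_right hX1 (by norm_num))
      have hchain : 10 ^ (8 * n ^ 2) * (10 ^ (4 * n ^ 3) * X n ^ 8)
          ≤ (D ^ 18 + D ^ 3 + D) * (10 ^ (4 * n ^ 3) * X n ^ 8) := by
        calc 10 ^ (8 * n ^ 2) * (10 ^ (4 * n ^ 3) * X n ^ 8)
            = fK K (X n) ^ 4 := hfx.symm
          _ ≤ d1 * g (d1 * X n) + d1 * X n := H1 _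
          _ ≤ D * T n + D * X n := by gcongr <;> omega
          _ = D ^ 18 * (10 ^ (4 * n ^ 3) * X n ^ 8) + D ^ 3 * X n + D * X n := by
              rw [hTdef]; ring
          _ ≤ D ^ 18 * (10 ^ (4 * n ^ 3) * X n ^ 8)
              + D ^ 3 * (10 ^ (4 * n ^ 3) * X n ^ 8)
              + D * (10 ^ (4 * n ^ 3) * X n ^ 8) := by gcongr
          _ = (D ^ 18 + D ^ 3 + D) * (10 ^ (4 * n ^ 3) * X n ^ 8) := by ring
      have hpos : 0 < 10 ^ (4 * n ^ 3) * X n ^ 8 := by positivity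
      have hcancel : 10 ^ (8 * n ^ 2) ≤ D ^ 18 + D ^ 3 + D :=
        Nat.le_of_mul_le_mul_right hchain hpos
      have hD1 : 1 ≤ D := by omega
      have hbig : D ^ 18 + D ^ 3 + D < 10 ^ (8 * n ^ 2) := by
        have e1 : D ^ 3 ≤ D ^ 18 := Nat.pow_le_pow_right hD1 (by norm_num)
        have e2 : D ≤ D ^ 18 := by
          calc D = D ^ 1 := (pow_one D).symm
            _ ≤ D ^ 18 := Nat.pow_le_pow_right hD1 (by norm_num)
        have e3 : (3:ℕ) ≤ (D + 1) ^ 2 := by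
          calc (3:ℕ) ≤ 3 ^ 2 := by norm_num
            _ ≤ (D + 1) ^ 2 := Nat.pow_le_pow_left (by omega) 2
        have e4 : D ^ 18 ≤ (D + 1) ^ 18 := Nat.pow_le_pow_left (by omega) 18
        have e5 : (D + 1) ^ 20 < (10 ^ (D + 1)) ^ 20 :=
          Nat.pow_lt_pow_left hDpow (by norm_num)
        have e6 : (10:ℕ) ^ ((D + 1) * 20) ≤ 10 ^ (8 * n ^ 2) := by
          refine Nat.pow_le_pow_right (by norm_num) ?_
          calc (D + 1) * 20 = 20 * (D + 1) := by ring
            _ ≤ n := hn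
            _ ≤ n ^ 2 := Nat.le_self_pow two_ne_zero n
            _ ≤ 8 * n ^ 2 := Nat.le_mul_of_pos_left _ (by norm_num)
        have e7 : 3 * D ^ 18 ≤ 3 * (D + 1) ^ 18 := Nat.mul_le_mul_left _ e4
        calc D ^ 18 + D ^ 3 + D ≤ 3 * (D + 1) ^ 18 := by omega
          _ ≤ (D + 1) ^ 2 * (D + 1) ^ 18 := Nat.mul_le_mul_right _ e3
          _ = (D + 1) ^ 20 := by ring
          _ < (10 ^ (D + 1)) ^ 20 := e5
          _ = 10 ^ ((D + 1) * 20) := by rw [← pow_mul]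
          _ ≤ 10 ^ (8 * n ^ 2) := e6
      omega
  -- decision procedure
  set L : List Bool := List.ofFn (fun i : Fin N => decide ((i : ℕ) ∈ K)) with hL
  set bf : ℕ → Bool := fun n =>
    bif decide (n < N) then L.getD n false else decide (g (d1 * X n) ≤ T n) with hbf
  apply hK
  rw [ComputablePred.computable_iff]
  have hbfn : ∀ n, (bf n = true) ↔ n ∈ K := by
    intro n
    by_cases hn : n < N
    · have h1 : bf n = L.getD n false := by
        rw [hbf]; simp [hn]
      have h2 : n < L.length := by rw [hL, List.length_ofFn]; exact hn
      rw [h1, List.getD_eq_getElem _ _ h2]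
      simp only [hL, List.getElem_ofFn]
      simp
    · have h1 : bf n = decide (g (d1 * X n) ≤ T n) := by
        rw [hbf]; simp [hn]
      rw [h1, decide_eq_true_iff]
      exact (key n (by omega)).symm
  have p1 : Primrec (fun n : ℕ => (n - 1) ^ 2 + 1) :=
    Primrec.nat_add.comp
      (nat_pow_primrec'.comp (Primrec.nat_sub.comp Primrec.id (Primrec.const 1))
        (Primrec.const 2))
      (Primrec.const 1)
  have pX : Primrec X := by
    rw [hXdef]; exact nat_pow_primrec'.comp (Primrec.const 10) p1
  have pT : Primrec T := by
    rw [hTdef]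
    exact Primrec.nat_add.comp
      (Primrec.nat_mul.comp
        (Primrec.nat_mul.comp (Primrec.const (D ^ 17))
          (nat_pow_primrec'.comp (Primrec.const 10)
            (Primrec.nat_mul.comp (Primrec.const 4)
              (nat_pow_primrec'.comp Primrec.id (Primrec.const 3)))))
        (nat_pow_primrec'.comp pX (Primrec.const 8)))
      (Primrec.nat_mul.comp (Primrec.const (D ^ 2)) pX)
  have pA : Primrec (fun n => d1 * X n) := Primrec.nat_mul.comp (Primrec.const d1) pX
  have cmain : Computable (fun n => decide (g (d1 * X n) ≤ T n)) :=
    Primrec.nat_le.decide.to_comp.comp (hg.comp pA.to_comp) pT.to_comp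
  have cL : Primrec (fun n => L.getD n false) :=
    (Primrec.list_getD false).comp (Primrec.const L) Primrec.id
  have ccond : Primrec (fun n => decide (n < N)) :=
    Primrec.nat_lt.decide.comp Primrec.id (Primrec.const N)
  have cbf : Computable bf := by
    rw [hbf]; exact Computable.cond ccond.to_comp cL.to_comp cmain
  exact ⟨bf, cbf, funext fun n => propext (hbfn n).symm⟩
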